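/- Let a, b ∈ ℂ with a ≠ 0 and |b| ≤ |a|, let c be a nonzero complex number, and set m₋ := 1 − conj(b)/conj(a) and m₊ := 1 + conj(b)/conj(a). Then the map ω(ζ) := (c/2)·(m₋·ζ + m₊·f(ζ)) is injective on Ω := ℂ ∖ [−1,1]. -/

import Mathlib

/-- The slit `[-1,1]`: complex numbers with zero imaginary part and real part in `[-1,1]`. -/
def slit : Set ℂ := {z : ℂ | z.im = 0 ∧ -1 ≤ z.re ∧ z.re ≤ 1}

/-- The cut plane `Ω = ℂ ∖ [-1,1]`. -/
def Omg : Set ℂ := slitᶜ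

/-- The branch `f(ζ) = ζ·(1 − ζ⁻²)^{1/2}` of `(ζ² − 1)^{1/2}` with `f(ζ) ~ ζ` at infinity. -/
noncomputable def fbr (ζ : ℂ) : ℂ := ζ * (1 - ζ⁻¹ ^ 2) ^ ((1 : ℂ) / 2)

lemma omg_ne_zero {ζ : ℂ} (h : ζ ∈ Omg) : ζ ≠ 0 := by
  intro h0
  exact h (by simp [slit, h0])

lemma omg_sq_ne_one {ζ : ℂ} (h : ζ ∈ Omg) : ζ ^ 2 ≠ 1 := by
  intro h1
  have : (ζ - 1) * (ζ + 1) = 0 := by ring_nf; linear_combination h1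
  rcases mul_eq_zero.mp this with h' | h'
  · exact h (by simp [slit, sub_eq_zero.mp h'])
  · have : ζ = -1 := by linear_combination h'
    exact h (by simp [slit, this])

lemma fbr_sq {ζ : ℂ} (h : ζ ∈ Omg) : fbr ζ ^ 2 = ζ ^ 2 - 1 := by
  have hz := omg_ne_zero h
  have hz2 := omg_sq_ne_one h
  have hne : (1 : ℂ) - ζ⁻¹ ^ 2 ≠ 0 := by
    intro h0
    apply hz2
    have h1 : ζ⁻¹ ^ 2 = 1 := by linear_combination -h0
    have h2 : ζ ^ 2 * ζ⁻¹ ^ 2 = 1 := by field_simp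
    rw [h1, mul_one] at h2
    exact h2
  have hsq : ((1 - ζ⁻¹ ^ 2) ^ ((1 : ℂ) / 2)) ^ 2 = 1 - ζ⁻¹ ^ 2 := by
    rw [sq, ← Complex.cpow_add _ _ hne]
    norm_num
  unfold fbr
  rw [mul_pow, hsq]
  field_simp

lemma re_half_pow (z : ℂ) : 0 ≤ (z ^ ((1 : ℂ) / 2)).re := by
  by_cases hz : z = 0
  · simp [hz, Complex.zero_cpow (by norm_num : (1 : ℂ) / 2 ≠ 0)]
  · rw [Complex.cpow_def_of_ne_zero hz, Complex.exp_re]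
    apply mul_nonneg (Real.exp_pos _).le
    apply Real.cos_nonneg_of_mem_Icc
    constructor
    · have := Complex.neg_pi_lt_arg z
      simp [Complex.mul_im, Complex.log_im]
      linarith
    · have := Complex.arg_le_pi z
      simp [Complex.mul_im, Complex.log_im]
      linarith

lemma g_mul_u {ζ : ℂ} (h : ζ ∈ Omg) : (ζ + fbr ζ) * (ζ - fbr ζ) = 1 := by
  have := fbr_sq h
  linear_combination -this

lemma re_prod_nonneg (ζ : ℂ) : 0 ≤ (ζ * (starRingEnd ℂ) (fbr ζ)).re := by
  have : ζ * (starRingEnd ℂ) (fbr ζ)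
      = (Complex.normSq ζ : ℂ) * (starRingEnd ℂ) ((1 - ζ⁻¹ ^ 2) ^ ((1 : ℂ) / 2)) := by
    unfold fbr
    rw [map_mul, ← mul_assoc, Complex.mul_conj]
  rw [this, Complex.re_ofReal_mul, Complex.conj_re]
  exact mul_nonneg (Complex.normSq_nonneg ζ) (re_half_pow _)

lemma one_lt_abs_g {ζ : ℂ} (h : ζ ∈ Omg) : 1 < ‖ζ + fbr ζ‖ := by
  set g := ζ + fbr ζ with hg
  set u := ζ - fbr ζ with hu
  have r : g * u = 1 := g_mul_u h
  have hprod : Complex.normSq g * Complex.normSq u = 1 := by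
    rw [← map_mul, r, map_one]
  have hdiff : Complex.normSq u ≤ Complex.normSq g := by
    have h4 := re_prod_nonneg ζ
    rw [hg, hu, Complex.normSq_add, Complex.normSq_sub]
    linarith
  have h1 : 1 ≤ Complex.normSq g := by
    nlinarith [Complex.normSq_nonneg g, Complex.normSq_nonneg u]
  have hne1 : Complex.normSq g ≠ 1 := by
    intro he
    have hg0 : g ≠ 0 := by
      intro h0
      rw [h0, zero_mul] at r
      exact one_ne_zero r.symm
    have hcg : (starRingEnd ℂ) g = u := by
      apply mul_left_cancel₀ hg0
      rw [r, Complex.mul_conj, he]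
      norm_num
    have hz : ζ = ((g.re : ℝ) : ℂ) := by
      have hac := Complex.add_conj g
      rw [hcg] at hac
      have : g + u = 2 * ζ := by rw [hg, hu]; ring
      rw [this] at hac
      have : (2 : ℂ) ≠ 0 := by norm_num
      rw [Complex.ofReal_mul, Complex.ofReal_ofNat] at hac
      linear_combination hac / 2
    apply h
    have habs : ‖g‖ = 1 := by
      have := Complex.sq_norm g
      nlinarith [norm_nonneg g]
    have hre := Complex.abs_re_le_norm g
    rw [habs] at hre
    simp only [slit, Set.mem_setOf_eq]
    rw [hz]
    refine ⟨by simp, by simp; linarith [(abs_le.mp hre).1], by simp; linarith [(abs_le.mp hre).2]⟩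
  have h1' : 1 < Complex.normSq g := lt_of_le_of_ne h1 (Ne.symm hne1)
  have := Complex.sq_norm g
  nlinarith [norm_nonneg g]

theorem stmt_2 (a b c : ℂ) (ha : a ≠ 0) (hba : ‖b‖ ≤ ‖a‖) (hc : c ≠ 0) :
    Set.InjOn
      (fun ζ : ℂ => (c / 2) *
        ((1 - (starRingEnd ℂ) b / (starRingEnd ℂ) a) * ζ +
          (1 + (starRingEnd ℂ) b / (starRingEnd ℂ) a) * fbr ζ)) Omg := by
  intro ζ₁ h₁ ζ₂ h₂ heq
  set d : ℂ := (starRingEnd ℂ) b / (starRingEnd ℂ) a with hd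
  simp only at heq
  have hc2 : (c / 2 : ℂ) ≠ 0 := by
    simp [div_ne_zero hc]
  have hE : (1 - d) * ζ₁ + (1 + d) * fbr ζ₁ = (1 - d) * ζ₂ + (1 + d) * fbr ζ₂ :=
    mul_left_cancel₀ hc2 heq
  have r₁ := g_mul_u h₁
  have r₂ := g_mul_u h₂
  set g₁ := ζ₁ + fbr ζ₁ with hg₁
  set g₂ := ζ₂ + fbr ζ₂ with hg₂
  have a₁ := one_lt_abs_g h₁
  have a₂ := one_lt_abs_g h₂
  rw [← hg₁] at a₁
  rw [← hg₂] at a₂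
  have hdle : ‖d‖ ≤ 1 := by
    rw [hd, norm_div, Complex.norm_conj, Complex.norm_conj]
    rw [div_le_one (norm_pos_iff.mpr ha)]
    exact hba
  have key : (g₁ - g₂) * (g₁ * g₂ + d) = 0 := by
    rw [hg₁, hg₂]
    linear_combination (g₁ * g₂) * hE + d * g₂ * r₁ - d * g₁ * r₂
  have hne : g₁ * g₂ + d ≠ 0 := by
    intro h0
    have : d = -(g₁ * g₂) := by linear_combination h0
    have habs : ‖d‖ = ‖g₁‖ * ‖g₂‖ := by
      rw [this, norm_neg, norm_mul]
    nlinarith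
  have hgeq : g₁ = g₂ := sub_eq_zero.mp ((mul_eq_zero.mp key).resolve_right hne)
  have hg0 : g₁ ≠ 0 := by
    intro h0
    rw [h0] at a₁
    norm_num at a₁
  have hueq : ζ₁ - fbr ζ₁ = ζ₂ - fbr ζ₂ := by
    apply mul_left_cancel₀ hg0
    rw [r₁, hgeq, r₂]
  linear_combination (hgeq + hueq) / 2
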